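/- Let M be a monoid, A an M-semimodule, and f: M × M → A a 2-cocycle. Then B_f = A × M with composition (a₁,x) + (a₂,y) = (a₁ + xa₂ + f(x,y), xy) is a monoid with identity (0,1); the sequence E_f: A →^{κ_f} B_f →^{σ_f} M with κ_f(a) = (a,1) and σ_f(a,x) = x is a Schreier extension of the M-semimodule A by M whose representatives are exactly the elements (a,x) with a ∈ U(A); and f is a factor set of E_f (for the representatives (0,x)). -/

import Mathlib

universe u v

section SchreierSemimodule

/- Throughout, `M` is a (multiplicatively written) monoid and an `M`-semimodule is an
additively written abelian monoid `A` together with a `DistribMulAction` of `M` on `A`,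
i.e. an action satisfying `x • (a + a') = x • a + x • a'`, `x • 0 = 0`,
`(x * y) • a = x • (y • a)` and `1 • a = a`. -/

variable (M : Type u) (A : Type v) [Monoid M] [AddCommMonoid A] [DistribMulAction M A]

/-- `u` is a representative over `x ∈ M` for the sequence `A →^κ B →^σ M`:
`σ u = x` and every `b ∈ σ⁻¹(x)` can be written uniquely as `b = κ a + u`. -/
def IsRepOf {B : Type*} [AddMonoid B] (κ : A →+ B) (σ : B → M) (x : M) (u : B) : Prop :=
  σ u = x ∧ ∀ b : B, σ b = x → ∃! a : A, b = κ a + u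

/-- A Schreier extension of the `M`-semimodule `A` by the monoid `M`:  a sequence
`A →^κ B →^σ M` of monoids (`σ` being a homomorphism from the additively written
monoid `B` to the multiplicatively written monoid `M`) such that `κ` is injective,
`σ` is surjective, `κ(A) = σ⁻¹(1)`, every `x ∈ M` admits a representative, and
moreover `b + κ a = κ (σ b • a) + b` for all `a ∈ A`, `b ∈ B`. -/
structure SchreierExtension where
  /-- the middle monoid of the extension -/
  B : Type (max u v)
  [instB : AddMonoid B]
  κ : A →+ B
  σ : B → M
  sigma_zero : σ 0 = 1
  sigma_add : ∀ b₁ b₂ : B, σ (b₁ + b₂) = σ b₁ * σ b₂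
  kappa_inj : Function.Injective κ
  sigma_surj : Function.Surjective σ
  range_eq : ∀ b : B, σ b = 1 ↔ b ∈ Set.range κ
  rep_exists : ∀ x : M, ∃ u : B, IsRepOf M A κ σ x u
  compat : ∀ (a : A) (b : B), b + κ a = κ (σ b • a) + b

attribute [instance] SchreierExtension.instB

variable {M A}

/-- `u` is a representative of the Schreier extension `E` over `x`. -/
def SchreierExtension.IsRep (E : SchreierExtension M A) (x : M) (u : E.B) : Prop :=
  IsRepOf M A E.κ E.σ x u

variable {A' : Type v} [AddCommMonoid A'] [DistribMulAction M A']

/-- `(α, β, 1_M)` is a morphism of Schreier extensions from `E` to `E'`:  the two squares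
commute and `β` carries representatives to representatives. -/
def IsSchreierHom (E : SchreierExtension M A) (E' : SchreierExtension M A')
    (α : A →+ A') (β : E.B →+ E'.B) : Prop :=
  (∀ a : A, β (E.κ a) = E'.κ (α a)) ∧ (∀ b : E.B, E'.σ (β b) = E.σ b) ∧
    ∀ (x : M) (u : E.B), E.IsRep x u → E'.IsRep x (β u)

/-- Two Schreier extensions of the `M`-semimodule `A` by `M` are congruent if there is a
monoid homomorphism between the middle monoids which commutes with the inclusions and the
projections and carries representatives to representatives, i.e. a morphism of the form
`(1_A, β, 1_M)`. -/
def SchreierCongruent (E E' : SchreierExtension M A) : Prop :=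
  ∃ β : E.B →+ E'.B, IsSchreierHom E E' (AddMonoidHom.id A) β

end SchreierSemimodule


section Cocycles

variable (M : Type u) (A : Type v) [Monoid M] [AddCommMonoid A] [DistribMulAction M A]

/-- A (normalized) `2`-cocycle of the monoid `M` with coefficients in the `M`-semimodule
`A`: `f (x, 1) = 0 = f (1, y)` and `x • f (y, z) + f (x, y*z) = f (x*y, z) + f (x, y)`. -/
def IsCocycle (f : M → M → A) : Prop :=
  (∀ x : M, f x 1 = 0) ∧ (∀ y : M, f 1 y = 0) ∧
    ∀ x y z : M, x • f y z + f x (y * z) = f (x * y) z + f x y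

/-- The type of (normalized) `2`-cocycles of `M` with coefficients in `A`. -/
def Cocycle : Type (max u v) := {f : M → M → A // IsCocycle M A f}

/-- The zero `2`-cocycle. -/
def zeroCocycle : Cocycle M A :=
  ⟨fun _ _ => (0 : A), fun _ => rfl, fun _ => rfl, by intro x y z; simp⟩

/-- Two `2`-cocycles `f, f'` are strongly cohomologous if there is a function
`g : M → U(A)` into the group of invertible elements of `A` with `g 1 = 0` and
`f (x, y) = f' (x, y) + x • g y − g (x*y) + g x` for all `x, y ∈ M`. -/
def StronglyCohomologous (f f' : M → M → A) : Prop :=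
  ∃ g : M → AddUnits A, g 1 = 0 ∧
    ∀ x y : M, f x y = f' x y + x • (g y : A) + ((-(g (x * y)) : AddUnits A) : A) + (g x : A)

/-- Two `2`-cocycles `f, f'` are cohomologous if there are functions `g₁, g₂ : M → A` with
`g₁ 1 = 0 = g₂ 1` and
`f (x,y) + x • g₁ y + g₁ x + g₂ (x*y) = f' (x,y) + x • g₂ y + g₂ x + g₁ (x*y)`. -/
def Cohomologous (f f' : M → M → A) : Prop :=
  ∃ g₁ g₂ : M → A, g₁ 1 = 0 ∧ g₂ 1 = 0 ∧
    ∀ x y : M, f x y + x • g₁ y + g₁ x + g₂ (x * y)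
      = f' x y + x • g₂ y + g₂ x + g₁ (x * y)

variable {M A}

/-- The underlying set `B_f = A × M` of the Schreier extension `E_f` associated with a
`2`-cocycle `f`. -/
@[ext] structure Bf (f : Cocycle M A) where
  a : A
  x : M

namespace Bf

variable (f : Cocycle M A)

/-- The composition `(a₁, x) + (a₂, y) = (a₁ + x • a₂ + f (x, y), x * y)` on `B_f`. -/
protected def add (p q : Bf f) : Bf f := ⟨p.a + p.x • q.a + f.1 p.x q.x, p.x * q.x⟩

instance : Zero (Bf f) := ⟨⟨0, 1⟩⟩
instance : Add (Bf f) := ⟨Bf.add f⟩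

instance : AddMonoid (Bf f) where
  nsmul := nsmulRec
  add_assoc p q r := by
    show (Bf.add f (Bf.add f p q) r) = Bf.add f p (Bf.add f q r)
    unfold Bf.add
    have h := f.2.2.2 p.x q.x r.x
    simp only [Bf.mk.injEq]
    refine ⟨?_, mul_assoc _ _ _⟩
    calc p.a + p.x • q.a + f.1 p.x q.x + (p.x * q.x) • r.a + f.1 (p.x * q.x) r.x
        = p.a + p.x • q.a + p.x • (q.x • r.a) + (f.1 (p.x * q.x) r.x + f.1 p.x q.x) := by
          rw [mul_smul]; abel
      _ = p.a + p.x • q.a + p.x • (q.x • r.a) + (p.x • f.1 q.x r.x + f.1 p.x (q.x * r.x)) := by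
          rw [h]
      _ = p.a + p.x • (q.a + q.x • r.a + f.1 q.x r.x) + f.1 p.x (q.x * r.x) := by
          rw [smul_add, smul_add]; abel
  zero_add p := by
    show Bf.add f ⟨0, 1⟩ p = p
    unfold Bf.add
    cases p with
    | mk a x => simp [f.2.2.1 x]
  add_zero p := by
    show Bf.add f p ⟨0, 1⟩ = p
    unfold Bf.add
    cases p with
    | mk a x => simp [f.2.1 x]

theorem add_def (p q : Bf f) : p + q = ⟨p.a + p.x • q.a + f.1 p.x q.x, p.x * q.x⟩ := rfl

theorem zero_def : (0 : Bf f) = ⟨0, 1⟩ := rfl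

end Bf

/-- The inclusion `κ_f : A → B_f`, `a ↦ (a, 1)`. -/
def kappaF (f : Cocycle M A) : A →+ Bf f where
  toFun a := ⟨a, 1⟩
  map_zero' := rfl
  map_add' a b := by
    rw [Bf.add_def]
    simp [f.2.2.1]

/-- The projection `σ_f : B_f → M`, `(a, x) ↦ x`. -/
def sigmaF (f : Cocycle M A) : Bf f → M := fun p => p.x

end Cocycles

section ExtOfCocycle

variable {M : Type u} {A : Type v} [Monoid M] [AddCommMonoid A] [DistribMulAction M A]

/-- The Schreier extension `E_f : A →^{κ_f} B_f →^{σ_f} M` of the `M`-semimodule `A` by `M`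
associated with a `2`-cocycle `f`. -/
def extOfCocycle (f : Cocycle M A) : SchreierExtension M A where
  B := Bf f
  κ := kappaF f
  σ := sigmaF f
  sigma_zero := rfl
  sigma_add _ _ := rfl
  kappa_inj a b h := congrArg Bf.a h
  sigma_surj x := ⟨⟨0, x⟩, rfl⟩
  range_eq b := by
    constructor
    · intro h
      exact ⟨b.a, by cases b; cases h; rfl⟩
    · rintro ⟨a, rfl⟩
      rfl
  rep_exists x := by
    refine ⟨⟨0, x⟩, rfl, fun b hb => ⟨b.a, ?_, ?_⟩⟩
    · cases b with
      | mk a y =>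
        have hx : y = x := hb
        subst hx
        show Bf.mk a y = kappaF f a + ⟨0, y⟩
        rw [show kappaF f a = ⟨a, 1⟩ from rfl, Bf.add_def]
        simp [f.2.2.1]
    · intro a' ha'
      rw [show kappaF f a' = ⟨a', 1⟩ from rfl, Bf.add_def] at ha'
      have := congrArg Bf.a ha'
      simpa [f.2.2.1] using this.symm
  compat a b := by
    show b + kappaF f a = kappaF f (b.x • a) + b
    rw [show kappaF f a = ⟨a, 1⟩ from rfl, show kappaF f (b.x • a) = ⟨b.x • a, 1⟩ from rfl,
      Bf.add_def, Bf.add_def]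
    simp [f.2.1, f.2.2.1, add_comm]

end ExtOfCocycle

section Semidirect

variable (M : Type u) (A : Type v) [Monoid M] [AddCommMonoid A] [DistribMulAction M A]

/-- The underlying set `A × M` of the semidirect product `A ⋊ M`. -/
@[ext] structure SemidirectCarrier where
  a : A
  x : M

namespace SemidirectCarrier

variable {M A}

/-- The composition `(a₁, x) + (a₂, y) = (a₁ + x • a₂, x * y)` on `A ⋊ M`. -/
protected def add (p q : SemidirectCarrier M A) : SemidirectCarrier M A :=
  ⟨p.a + p.x • q.a, p.x * q.x⟩

instance : Zero (SemidirectCarrier M A) := ⟨⟨0, 1⟩⟩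
instance : Add (SemidirectCarrier M A) := ⟨SemidirectCarrier.add⟩

instance : AddMonoid (SemidirectCarrier M A) where
  nsmul := nsmulRec
  add_assoc p q r := by
    show SemidirectCarrier.add (SemidirectCarrier.add p q) r
      = SemidirectCarrier.add p (SemidirectCarrier.add q r)
    unfold SemidirectCarrier.add
    simp only [SemidirectCarrier.mk.injEq]
    exact ⟨by rw [smul_add, mul_smul]; abel, mul_assoc _ _ _⟩
  zero_add p := by
    show SemidirectCarrier.add ⟨0, 1⟩ p = p
    unfold SemidirectCarrier.add
    cases p with
    | mk a x => simp
  add_zero p := by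
    show SemidirectCarrier.add p ⟨0, 1⟩ = p
    unfold SemidirectCarrier.add
    cases p with
    | mk a x => simp

theorem add_def (p q : SemidirectCarrier M A) : p + q = ⟨p.a + p.x • q.a, p.x * q.x⟩ := rfl

end SemidirectCarrier

/-- The semidirect product extension `0 : A →^ι A ⋊ M →^π M`, with `ι a = (a, 1)` and
`π (a, x) = x`. -/
def semidirectExtension : SchreierExtension M A where
  B := SemidirectCarrier M A
  κ :=
    { toFun := fun a => ⟨a, 1⟩
      map_zero' := rfl
      map_add' := fun a b => by rw [SemidirectCarrier.add_def]; simp }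
  σ := fun p => p.x
  sigma_zero := rfl
  sigma_add _ _ := rfl
  kappa_inj a b h := congrArg SemidirectCarrier.a h
  sigma_surj x := ⟨⟨0, x⟩, rfl⟩
  range_eq b := by
    constructor
    · intro h
      exact ⟨b.a, by cases b; cases h; rfl⟩
    · rintro ⟨a, rfl⟩
      rfl
  rep_exists x := by
    refine ⟨⟨0, x⟩, rfl, fun b hb => ⟨b.a, ?_, ?_⟩⟩
    · cases b with
      | mk a y =>
        have hx : y = x := hb
        subst hx
        show SemidirectCarrier.mk a y = SemidirectCarrier.add ⟨a, 1⟩ ⟨0, y⟩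
        unfold SemidirectCarrier.add
        simp
    · intro a' ha'
      have := congrArg SemidirectCarrier.a ha'
      simpa [SemidirectCarrier.add_def] using this.symm
  compat a b := by
    show SemidirectCarrier.add b ⟨a, 1⟩ = SemidirectCarrier.add ⟨b.x • a, 1⟩ b
    unfold SemidirectCarrier.add
    simp [add_comm]

end Semidirect

/-- Let `M` be a monoid, `A` an `M`-semimodule and `f : M × M → A` a (normalized)
`2`-cocycle.  Then `B_f = A × M` with the composition
`(a₁, x) + (a₂, y) = (a₁ + x • a₂ + f (x, y), x * y)` is a monoid with identity `(0, 1)`;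
the sequence `E_f : A →^{κ_f} B_f →^{σ_f} M` with `κ_f a = (a, 1)` and `σ_f (a, x) = x`
is a Schreier extension of the `M`-semimodule `A` by `M` whose representatives are exactly
the elements `(a, x)` with `a ∈ U(A)` invertible; and `f` is a factor set of `E_f`
relative to the representatives `(0, x)`. -/
theorem extOfCocycle_is_schreier {M : Type u} {A : Type v}
    [Monoid M] [AddCommMonoid A] [DistribMulAction M A] (f : Cocycle M A) :
    -- the composition and the identity element of `B_f`
    (∀ p q : Bf f, p + q = ⟨p.a + p.x • q.a + f.1 p.x q.x, p.x * q.x⟩) ∧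
    ((0 : Bf f) = ⟨0, 1⟩) ∧
    -- `B_f` is a monoid
    (∀ p q r : Bf f, p + q + r = p + (q + r)) ∧
    (∀ p : Bf f, 0 + p = p ∧ p + 0 = p) ∧
    -- `κ_f` and `σ_f` are as described
    (∀ a : A, (extOfCocycle f).κ a = ⟨a, 1⟩) ∧
    (∀ p : Bf f, (extOfCocycle f).σ p = p.x) ∧
    -- `E_f` is a Schreier extension of the `M`-semimodule `A` by `M`
    ((extOfCocycle f).σ 0 = 1) ∧
    (∀ p q : Bf f, (extOfCocycle f).σ (p + q) = (extOfCocycle f).σ p * (extOfCocycle f).σ q) ∧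
    Function.Injective (extOfCocycle f).κ ∧
    Function.Surjective (extOfCocycle f).σ ∧
    (∀ p : Bf f, (extOfCocycle f).σ p = 1 ↔ p ∈ Set.range (extOfCocycle f).κ) ∧
    (∀ x : M, ∃ u : Bf f, (extOfCocycle f).IsRep x u) ∧
    (∀ (a : A) (p : Bf f),
      p + kappaF f a = kappaF f (sigmaF f p • a) + p) ∧
    -- the representatives of `E_f` are exactly the pairs `(a, x)` with `a` invertible
    (∀ (x : M) (u : Bf f), (extOfCocycle f).IsRep x u ↔ IsAddUnit u.a ∧ u.x = x) ∧
    -- `f` is a factor set of `E_f` for the representatives `(0, x)`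
    (∀ x y : M,
      (⟨0, x⟩ : Bf f) + ⟨0, y⟩ = kappaF f (f.1 x y) + ⟨0, x * y⟩) := by

  refine ⟨Bf.add_def f, rfl, fun p q r => add_assoc p q r,
    fun p => ⟨zero_add p, add_zero p⟩, fun a => rfl, fun p => rfl, rfl, fun p q => rfl,
    (extOfCocycle f).kappa_inj, (extOfCocycle f).sigma_surj, (extOfCocycle f).range_eq,
    (extOfCocycle f).rep_exists, fun a p => (extOfCocycle f).compat a p, ?_, ?_⟩
  · intro x u
    show IsRepOf M A (kappaF f) (sigmaF f) x u ↔ _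
    constructor
    · rintro ⟨hx, hrep⟩
      refine ⟨?_, hx⟩
      obtain ⟨a, ha, -⟩ := hrep ⟨0, x⟩ rfl
      rw [show kappaF f a = ⟨a, 1⟩ from rfl, Bf.add_def] at ha
      have h0 : (0 : A) = a + u.a := by
        have := congrArg Bf.a ha
        simpa [f.2.2.1] using this
      exact IsAddUnit.of_add_eq_zero _ (by rw [add_comm]; exact h0.symm)
    · rintro ⟨⟨v, hv⟩, hx⟩
      refine ⟨hx, fun b hb => ?_⟩
      have hbx : b.x = x := hb
      refine ⟨b.a + (-v : AddUnits A), ?_, ?_⟩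
      · show b = kappaF f (b.a + ((-v : AddUnits A) : A)) + u
        rw [show kappaF f (b.a + ((-v : AddUnits A) : A)) = ⟨b.a + ((-v : AddUnits A) : A), 1⟩ from rfl,
          Bf.add_def]
        ext
        · simp only [f.2.2.1, one_smul, add_zero]
          rw [add_assoc]
          have : ((-v : AddUnits A) : A) + u.a = 0 := by
            rw [← hv]; exact AddUnits.neg_add v
          rw [this, add_zero]
        · simp [hbx, hx]
      · intro a' ha'
        rw [show kappaF f a' = ⟨a', 1⟩ from rfl, Bf.add_def] at ha'
        have := congrArg Bf.a ha'
        simp only [f.2.2.1, one_smul, add_zero] at this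
        have h2 : b.a + ((-v : AddUnits A) : A) = a' + u.a + ((-v : AddUnits A) : A) := by
          rw [← this]
        rw [add_assoc, ← hv] at h2
        simpa [AddUnits.add_neg v] using h2.symm
  · intro x y
    rw [show kappaF f (f.1 x y) = ⟨f.1 x y, 1⟩ from rfl, Bf.add_def, Bf.add_def]
    simp [f.2.2.1]
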